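/- Let S be a free group on x_1,…,x_d, Λ a commutative ring, and I = (i_1,…,i_k) a multi-index of height d. Define ρ: S → U_{k+1}(Λ) by setting, for μ < ν, ρ(σ)_{μν} = ε_{(i_μ,…,i_{ν-1})}(σ) (the Magnus coefficient), with diagonal entries 1 and entries below the diagonal 0. Then ρ is a group homomorphism. -/

import Mathlib

/-- The Magnus power series ring `Λ⟨⟨X_1,…,X_d⟩⟩` is modelled by coefficient functions
`List (Fin d) → Λ` (a multi-index `I = (i_1,…,i_k)` of height `d` is a list, with
`X_I = X_{i_1} ⋯ X_{i_k}`).  `convOne` is the constant series `1`. -/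
def convOne (Λ : Type*) [CommRing Λ] (d : ℕ) : List (Fin d) → Λ :=
  fun w => if w = [] then 1 else 0

/-- Multiplication (convolution) of power series in noncommuting variables:
the coefficient of `X_I` in `f · g` is `Σ_{I₁I₂ = I} f(I₁) g(I₂)`. -/
def conv {Λ : Type*} [CommRing Λ] {d : ℕ} (f g : List (Fin d) → Λ) : List (Fin d) → Λ :=
  fun w => ∑ k ∈ Finset.range (w.length + 1), f (w.take k) * g (w.drop k)

/-- The power series of a generator: `x_i ↦ 1 + X_i`, and
`x_i⁻¹ ↦ (1 + X_i)⁻¹ = Σ_m (-1)^m X_i^m`. -/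
def genSeries {Λ : Type*} [CommRing Λ] {d : ℕ} (i : Fin d) (b : Bool) : List (Fin d) → Λ :=
  fun w =>
    if ∀ j ∈ w, j = i then
      (if b then (if w.length ≤ 1 then 1 else 0) else (-1) ^ w.length)
    else 0

/-- The Magnus expansion `ψ(σ) ∈ Λ⟨⟨X_1,…,X_d⟩⟩` of `σ` in the free group on `x_1,…,x_d`:
the product of the series of the letters of the (reduced) word of `σ`. -/
def magnus (Λ : Type*) [CommRing Λ] {d : ℕ} (σ : FreeGroup (Fin d)) : List (Fin d) → Λ :=
  (σ.toWord.map fun q => genSeries (Λ := Λ) q.1 q.2).foldr conv (convOne Λ d)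

/-- `ε_I(σ)`: the coefficient of `X_I` in the Magnus expansion of `σ`. -/
def eps (Λ : Type*) [CommRing Λ] {d : ℕ} (I : List (Fin d)) (σ : FreeGroup (Fin d)) : Λ :=
  magnus Λ σ I

namespace Stmt17Aux

variable {Λ : Type*} [CommRing Λ] {d : ℕ}

lemma conv_nil (f g : List (Fin d) → Λ) : conv f g [] = f [] * g [] := by
  simp [conv]

lemma conv_cons (f g : List (Fin d) → Λ) (a : Fin d) (w : List (Fin d)) :
    conv f g (a :: w) = f [] * g (a :: w) + conv (fun t => f (a :: t)) g w := by
  show (∑ k ∈ Finset.range (w.length + 1 + 1), _) = _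
  rw [Finset.sum_range_succ']
  simp [conv, add_comm]

lemma conv_assoc (f g h : List (Fin d) → Λ) (w : List (Fin d)) :
    conv (conv f g) h w = conv f (conv g h) w := by
  induction w generalizing f with
  | nil => simp [conv_nil, mul_assoc]
  | cons a w ih =>
    rw [conv_cons, conv_cons, conv_nil, conv_cons]
    have h1 : (fun t => conv f g (a :: t))
        = fun t => f [] * g (a :: t) + conv (fun s => f (a :: s)) g t :=
      funext (conv_cons f g a)
    rw [h1]
    have h2 : conv (fun t => f [] * g (a :: t) + conv (fun s => f (a :: s)) g t) h w
        = f [] * conv (fun t => g (a :: t)) h w + conv (conv (fun s => f (a :: s)) g) h w := by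
      simp [conv, add_mul, mul_assoc, Finset.sum_add_distrib, Finset.mul_sum]
    rw [h2, ih]
    ring

lemma one_conv (f : List (Fin d) → Λ) : conv (convOne Λ d) f = f := by
  funext w
  show (∑ k ∈ Finset.range (w.length + 1),
    (if w.take k = [] then (1:Λ) else 0) * f (w.drop k)) = f w
  rw [Finset.sum_eq_single 0]
  · simp
  · intro k hk hk0
    rw [if_neg, zero_mul]
    intro hnil
    rcases List.take_eq_nil_iff.mp hnil with h | h
    · exact hk0 h
    · subst h; simp only [Finset.mem_range, List.length_nil] at hk; omega
  · simp

lemma conv_one (f : List (Fin d) → Λ) : conv f (convOne Λ d) = f := by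
  funext w
  show (∑ k ∈ Finset.range (w.length + 1),
    f (w.take k) * (if w.drop k = [] then (1:Λ) else 0)) = f w
  rw [Finset.sum_eq_single w.length]
  · simp
  · intro k hk hkn
    rw [if_neg, mul_zero]
    simp only [Finset.mem_range] at hk
    rw [List.drop_eq_nil_iff]
    omega
  · simp

def Mag (Λ : Type*) (d : ℕ) := List (Fin d) → Λ

instance : Monoid (Mag Λ d) where
  one := convOne Λ d
  mul := conv
  mul_assoc f g h := funext (conv_assoc f g h)
  one_mul := one_conv
  mul_one := conv_one

lemma sum_alt (n : ℕ) :
    (∑ k ∈ Finset.range (n + 1), if k ≤ 1 then ((-1 : Λ)) ^ (n - k) else 0)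
      = if n = 0 then 1 else 0 := by
  cases n with
  | zero => rw [Finset.sum_range_one]; simp
  | succ m =>
    have hsub : Finset.range 2 ⊆ Finset.range (m + 2) := Finset.range_subset_range.mpr (by omega)
    rw [← Finset.sum_subset hsub (by
      intro x hx hx2
      simp only [Finset.mem_range] at hx hx2
      rw [if_neg]; omega)]
    rw [Finset.sum_range_succ, Finset.sum_range_one]
    simp [pow_succ]

lemma conv_tf (i : Fin d) :
    conv (genSeries (Λ := Λ) i true) (genSeries i false) = convOne Λ d := by
  funext w
  by_cases hall : ∀ j ∈ w, j = i
  · have hconv : conv (genSeries (Λ := Λ) i true) (genSeries i false) w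
        = ∑ k ∈ Finset.range (w.length + 1),
            if k ≤ 1 then ((-1 : Λ)) ^ (w.length - k) else 0 := by
      refine Finset.sum_congr rfl fun k hk => ?_
      simp only [Finset.mem_range] at hk
      show genSeries (Λ := Λ) i true (w.take k) * genSeries i false (w.drop k) = _
      unfold genSeries
      rw [if_pos (fun j hj => hall j (List.take_subset _ _ hj)),
          if_pos (fun j hj => hall j (List.drop_subset _ _ hj))]
      simp only [if_true, List.length_take, List.length_drop]
      rw [Nat.min_eq_left (by omega)]
      split <;> simp
    rw [hconv, sum_alt]
    show _ = if w = [] then (1:Λ) else 0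
    simp [List.length_eq_zero_iff]
  · push_neg at hall
    obtain ⟨j, hj, hji⟩ := hall
    have hw : w ≠ [] := by rintro rfl; simp at hj
    show _ = if w = [] then (1:Λ) else 0
    rw [if_neg hw]
    refine Finset.sum_eq_zero fun k hk => ?_
    have hmem : j ∈ w.take k ++ w.drop k := by rw [List.take_append_drop]; exact hj
    rcases List.mem_append.mp hmem with h | h
    · rw [show genSeries (Λ := Λ) i true (w.take k) = 0 from if_neg (fun hA => hji (hA j h)),
        zero_mul]
    · rw [show genSeries (Λ := Λ) i false (w.drop k) = 0 from if_neg (fun hA => hji (hA j h)),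
        mul_zero]

lemma conv_ft (i : Fin d) :
    conv (genSeries (Λ := Λ) i false) (genSeries i true) = convOne Λ d := by
  funext w
  by_cases hall : ∀ j ∈ w, j = i
  · have hconv : conv (genSeries (Λ := Λ) i false) (genSeries i true) w
        = ∑ k ∈ Finset.range (w.length + 1),
            if w.length - k ≤ 1 then ((-1 : Λ)) ^ k else 0 := by
      refine Finset.sum_congr rfl fun k hk => ?_
      simp only [Finset.mem_range] at hk
      show genSeries (Λ := Λ) i false (w.take k) * genSeries i true (w.drop k) = _
      unfold genSeries
      rw [if_pos (fun j hj => hall j (List.take_subset _ _ hj)),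
          if_pos (fun j hj => hall j (List.drop_subset _ _ hj))]
      simp only [Bool.false_eq_true, if_false, if_true, List.length_take, List.length_drop]
      rw [Nat.min_eq_left (by omega)]
      split <;> simp [mul_comm]
    rw [hconv]
    rw [← Finset.sum_range_reflect]
    have : ∀ k ∈ Finset.range (w.length + 1),
        (if w.length - (w.length + 1 - 1 - k) ≤ 1 then ((-1 : Λ)) ^ (w.length + 1 - 1 - k) else 0)
          = if k ≤ 1 then ((-1 : Λ)) ^ (w.length - k) else 0 := by
      intro k hk
      simp only [Finset.mem_range] at hk
      have h1 : w.length + 1 - 1 - k = w.length - k := by omega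
      have h2 : w.length - (w.length - k) = k := by omega
      rw [h1, h2]
    rw [Finset.sum_congr rfl this, sum_alt]
    show _ = if w = [] then (1:Λ) else 0
    simp [List.length_eq_zero_iff]
  · push_neg at hall
    obtain ⟨j, hj, hji⟩ := hall
    have hw : w ≠ [] := by rintro rfl; simp at hj
    show _ = if w = [] then (1:Λ) else 0
    rw [if_neg hw]
    refine Finset.sum_eq_zero fun k hk => ?_
    have hmem : j ∈ w.take k ++ w.drop k := by rw [List.take_append_drop]; exact hj
    rcases List.mem_append.mp hmem with h | h
    · rw [show genSeries (Λ := Λ) i false (w.take k) = 0 from if_neg (fun hA => hji (hA j h)),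
        zero_mul]
    · rw [show genSeries (Λ := Λ) i true (w.drop k) = 0 from if_neg (fun hA => hji (hA j h)),
        mul_zero]

def genUnit (i : Fin d) : (Mag Λ d)ˣ where
  val := genSeries i true
  inv := genSeries i false
  val_inv := conv_tf i
  inv_val := conv_ft i

lemma foldr_eq (L : List (Fin d × Bool)) :
    (L.map fun q => genSeries (Λ := Λ) q.1 q.2).foldr conv (convOne Λ d)
      = ((L.map fun x => (cond x.2 (genUnit (Λ := Λ) x.1) (genUnit x.1)⁻¹ :
          (Mag Λ d)ˣ)).prod : (Mag Λ d)ˣ).val := by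
  induction L with
  | nil => simp; rfl
  | cons q L ih =>
    simp only [List.map_cons, List.foldr_cons, List.prod_cons, Units.val_mul]
    rw [ih]
    show conv (genSeries q.1 q.2) _ = _
    have : ((cond q.2 (genUnit (Λ := Λ) q.1) (genUnit q.1)⁻¹ : (Mag Λ d)ˣ) : Mag Λ d)
        = genSeries q.1 q.2 := by cases q.2 <;> rfl
    rw [this]
    rfl

lemma magnus_eq (σ : FreeGroup (Fin d)) :
    magnus Λ σ = ((FreeGroup.lift (genUnit (Λ := Λ) (d := d)) σ : (Mag Λ d)ˣ) : Mag Λ d) := by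
  conv_rhs => rw [← FreeGroup.mk_toWord (x := σ)]
  rw [FreeGroup.lift_mk]
  exact foldr_eq σ.toWord

lemma magnus_mul (σ τ : FreeGroup (Fin d)) :
    magnus Λ (σ * τ) = conv (magnus Λ σ) (magnus Λ τ) := by
  rw [magnus_eq, magnus_eq, magnus_eq, map_mul, Units.val_mul]; rfl

lemma magnus_one : magnus Λ (1 : FreeGroup (Fin d)) = convOne Λ d := by
  rw [magnus_eq, map_one, Units.val_one]; rfl

lemma genSeries_nil (i : Fin d) (b : Bool) : genSeries (Λ := Λ) i b [] = 1 := by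
  cases b <;> simp [genSeries]

lemma magnus_nil (σ : FreeGroup (Fin d)) : magnus Λ σ [] = 1 := by
  unfold magnus
  induction σ.toWord with
  | nil => rfl
  | cons q L ih =>
    rw [List.map_cons, List.foldr_cons, conv_nil, ih, genSeries_nil, one_mul]

lemma eps_one (w : List (Fin d)) :
    eps Λ w (1 : FreeGroup (Fin d)) = if w = [] then 1 else 0 := by
  rw [eps, magnus_one]; rfl

lemma eps_nil (σ : FreeGroup (Fin d)) : eps Λ ([] : List (Fin d)) σ = 1 :=
  magnus_nil σ

lemma eps_mul (w : List (Fin d)) (σ τ : FreeGroup (Fin d)) :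
    eps Λ w (σ * τ)
      = ∑ k ∈ Finset.range (w.length + 1), eps Λ (w.take k) σ * eps Λ (w.drop k) τ := by
  rw [eps, magnus_mul]; rfl

end Stmt17Aux

/-- Let `S` be the free group on `x_1,…,x_d`, `Λ` a commutative ring, and
`I = (i_1,…,i_k)` a multi-index of height `d`.  The map `ρ : S → U_{k+1}(Λ)` given by
`ρ(σ)_{μν} = ε_{(i_μ,…,i_{ν-1})}(σ)` for `μ < ν` (with 1's on the diagonal and 0's below)
is a group homomorphism. -/
theorem stmt17 (Λ : Type*) [CommRing Λ] (d : ℕ) (I : List (Fin d))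
    (ρ : FreeGroup (Fin d) → Matrix (Fin (I.length + 1)) (Fin (I.length + 1)) Λ)
    (hρ : ∀ (σ : FreeGroup (Fin d)) (μ ν : Fin (I.length + 1)),
      ρ σ μ ν =
        if (μ : ℕ) < (ν : ℕ) then eps Λ ((I.drop (μ : ℕ)).take ((ν : ℕ) - (μ : ℕ))) σ
        else if μ = ν then 1 else 0) :
    ρ 1 = 1 ∧ ∀ σ τ : FreeGroup (Fin d), ρ (σ * τ) = ρ σ * ρ τ := by
  constructor
  · ext μ ν
    rw [hρ, Matrix.one_apply]
    rcases lt_trichotomy (μ : ℕ) (ν : ℕ) with h | h | h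
    · rw [if_pos h, Stmt17Aux.eps_one, if_neg, if_neg (Fin.ne_of_val_ne (by omega))]
      have hν : (ν : ℕ) ≤ I.length := Nat.lt_succ_iff.mp ν.isLt
      intro heq
      have := congrArg List.length heq
      simp only [List.length_take, List.length_drop, List.length_nil] at this
      omega
    · have hμν : μ = ν := Fin.ext h
      rw [if_neg (by omega), if_pos hμν]
    · rw [if_neg (by omega), if_neg (Fin.ne_of_val_ne (show (μ:ℕ) ≠ (ν:ℕ) by omega))]
  · intro σ τ
    ext μ ν
    rw [Matrix.mul_apply, hρ]
    have hν : (ν : ℕ) ≤ I.length := Nat.lt_succ_iff.mp ν.isLt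
    have hμ : (μ : ℕ) ≤ I.length := Nat.lt_succ_iff.mp μ.isLt
    rcases lt_trichotomy (μ : ℕ) (ν : ℕ) with hlt | heq | hgt
    · rw [if_pos hlt, Stmt17Aux.eps_mul]
      have hlen : ((I.drop (μ : ℕ)).take ((ν : ℕ) - (μ : ℕ))).length = (ν : ℕ) - (μ : ℕ) := by
        simp only [List.length_take, List.length_drop]; omega
      rw [hlen]
      set t : ℕ → Λ := fun j =>
        (if (μ : ℕ) < j then eps Λ ((I.drop (μ : ℕ)).take (j - (μ : ℕ))) σ
          else if (μ : ℕ) = j then 1 else 0) *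
        (if j < (ν : ℕ) then eps Λ ((I.drop j).take ((ν : ℕ) - j)) τ
          else if j = (ν : ℕ) then 1 else 0) with ht
      have hsum : ∀ lam : Fin (I.length + 1), ρ σ μ lam * ρ τ lam ν = t (lam : ℕ) := by
        intro lam
        rw [hρ, hρ, ht]
        simp only [Fin.ext_iff]
      rw [Finset.sum_congr rfl (fun lam _ => hsum lam),
        Fin.sum_univ_eq_sum_range t (I.length + 1)]
      have hz : ∀ j ∈ Finset.range (I.length + 1), j ∉ Finset.Ico (μ : ℕ) ((ν : ℕ) + 1) →
          t j = 0 := by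
        intro j _ hj
        simp only [Finset.mem_Ico, not_and_or, not_le, not_lt] at hj
        rw [ht]
        beta_reduce
        rcases hj with hj | hj
        · rw [if_neg (show ¬ (μ : ℕ) < j by omega), if_neg (show (μ : ℕ) ≠ j by omega), zero_mul]
        · rw [if_neg (show ¬ j < (ν : ℕ) by omega), if_neg (show j ≠ (ν : ℕ) by omega), mul_zero]
      have hsub : Finset.Ico (μ : ℕ) ((ν : ℕ) + 1) ⊆ Finset.range (I.length + 1) := by
        intro j hj
        simp only [Finset.mem_Ico] at hj
        simp only [Finset.mem_range]
        omega
      rw [← Finset.sum_subset hsub hz, Finset.sum_Ico_eq_sum_range]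
      have hrange : (ν : ℕ) + 1 - (μ : ℕ) = (ν : ℕ) - (μ : ℕ) + 1 := by omega
      rw [hrange]
      refine Finset.sum_congr rfl fun k hk => ?_
      simp only [Finset.mem_range] at hk
      have hk' : k ≤ (ν : ℕ) - (μ : ℕ) := by omega
      rw [ht]
      beta_reduce
      have htake : ((I.drop (μ : ℕ)).take ((ν : ℕ) - (μ : ℕ))).take k = (I.drop (μ : ℕ)).take k := by
        rw [List.take_take, Nat.min_eq_left hk']
      have hdrop : ((I.drop (μ : ℕ)).take ((ν : ℕ) - (μ : ℕ))).drop k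
          = (I.drop ((μ : ℕ) + k)).take ((ν : ℕ) - ((μ : ℕ) + k)) := by
        rw [List.drop_take, List.drop_drop]
        congr 1
        omega
      rw [htake, hdrop]
      have hfst : (if (μ : ℕ) < (μ : ℕ) + k then eps Λ ((I.drop (μ : ℕ)).take ((μ : ℕ) + k - (μ : ℕ))) σ
          else if (μ : ℕ) = (μ : ℕ) + k then 1 else 0) = eps Λ ((I.drop (μ : ℕ)).take k) σ := by
        rcases Nat.eq_zero_or_pos k with hk0 | hk0
        · subst hk0
          rw [if_neg (by omega), if_pos (by omega)]
          simp [Stmt17Aux.eps_nil]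
        · rw [if_pos (by omega), Nat.add_sub_cancel_left]
      have hsnd : (if (μ : ℕ) + k < (ν : ℕ) then eps Λ ((I.drop ((μ : ℕ) + k)).take ((ν : ℕ) - ((μ : ℕ) + k))) τ
          else if (μ : ℕ) + k = (ν : ℕ) then 1 else 0)
          = eps Λ ((I.drop ((μ : ℕ) + k)).take ((ν : ℕ) - ((μ : ℕ) + k))) τ := by
        rcases lt_or_eq_of_le (show (μ : ℕ) + k ≤ (ν : ℕ) by omega) with h | h
        · rw [if_pos h]
        · rw [if_neg (by omega), if_pos h, h]
          simp [Stmt17Aux.eps_nil]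
      rw [hfst, hsnd]
    · have hμν : μ = ν := Fin.ext heq
      rw [if_neg (by omega), if_pos hμν]
      symm
      rw [Finset.sum_eq_single μ]
      · rw [hρ, hρ, if_neg (by omega), if_pos rfl, hμν, if_neg (by omega), if_pos rfl, one_mul]
      · intro lam _ hlam
        rw [hρ, hρ]
        by_cases h1 : (lam : ℕ) < (μ : ℕ)
        · rw [if_neg (show ¬ (μ : ℕ) < (lam : ℕ) by omega),
            if_neg (show μ ≠ lam from Fin.ne_of_val_ne (by omega)), zero_mul]
        · have hne : (lam : ℕ) ≠ (μ : ℕ) := fun e => hlam (Fin.ext e)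
          rw [if_neg (show ¬ (lam : ℕ) < (ν : ℕ) by omega),
            if_neg (show lam ≠ ν from Fin.ne_of_val_ne (by omega)), mul_zero]
      · intro h; exact absurd (Finset.mem_univ μ) h
    · rw [if_neg (by omega), if_neg (Fin.ne_of_val_ne (by omega))]
      symm
      refine Finset.sum_eq_zero fun lam _ => ?_
      rw [hρ, hρ]
      by_cases h1 : (lam : ℕ) < (μ : ℕ)
      · rw [if_neg (show ¬ (μ : ℕ) < (lam : ℕ) by omega),
          if_neg (show μ ≠ lam from Fin.ne_of_val_ne (by omega)), zero_mul]
      · rw [if_neg (show ¬ (lam : ℕ) < (ν : ℕ) by omega),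
          if_neg (show lam ≠ ν from Fin.ne_of_val_ne (by omega)), mul_zero]
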